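/- Let μ, σ > 0, p > c > 0, κ = (p−c)/p with κ ≥ σ²/(μ²+σ²), and f(x) = (1−2x)/(2√(x(1−x))). For α₁, α₂ with 0 ≤ α₁ < p/(2(μ − σ√((1−κ)/κ))) ≤ α₂, define q(α₁) = (μ² − σ² + 2μσ f(1−κ))·α₁/p and q(α₂) = μ + σ f(1−κ) − p/(4α₂). Then q(α₁) ≤ q(α₂) ≤ μ + σ f(1−κ). -/

import Mathlib

noncomputable def scarfF (x : ℝ) : ℝ := (1 - 2 * x) / (2 * Real.sqrt (x * (1 - x)))

/-- Monotone ordering of the misspecification-averse optimal order quantities in the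
two regimes of α, bounded above by the Scarf quantity μ + σ f(1−κ). -/
theorem stmt_4 (p c μ σ κ α₁ α₂ : ℝ) (hc : 0 < c) (hcp : c < p) (hμ : 0 < μ) (hσ : 0 < σ)
    (hκ : κ = (p - c) / p) (hnd : σ ^ 2 / (μ ^ 2 + σ ^ 2) ≤ κ)
    (h1 : 0 ≤ α₁)
    (h2 : α₁ < p / (2 * (μ - σ * Real.sqrt ((1 - κ) / κ))))
    (h3 : p / (2 * (μ - σ * Real.sqrt ((1 - κ) / κ))) ≤ α₂) :
    (μ ^ 2 - σ ^ 2 + 2 * μ * σ * scarfF (1 - κ)) * α₁ / p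
        ≤ μ + σ * scarfF (1 - κ) - p / (4 * α₂) ∧
    μ + σ * scarfF (1 - κ) - p / (4 * α₂) ≤ μ + σ * scarfF (1 - κ) := by
  have hp : 0 < p := hc.trans hcp
  have hκ0 : 0 < κ := by rw [hκ]; exact div_pos (by linarith) hp
  have hκ1 : κ < 1 := by
    rw [hκ, div_lt_one hp]; linarith
  set a := Real.sqrt κ with ha_def
  set b := Real.sqrt (1 - κ) with hb_def
  have ha : 0 < a := Real.sqrt_pos.mpr hκ0
  have hb : 0 < b := Real.sqrt_pos.mpr (by linarith)
  have ha2 : a ^ 2 = κ := Real.sq_sqrt hκ0.le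
  have hb2 : b ^ 2 = 1 - κ := Real.sq_sqrt (by linarith)
  have hs : Real.sqrt ((1 - κ) / κ) = b / a := by
    rw [Real.sqrt_div (by linarith : (0:ℝ) ≤ 1 - κ)]
  have hF : scarfF (1 - κ) = (a ^ 2 - b ^ 2) / (2 * (b * a)) := by
    unfold scarfF
    rw [show 1 - (1 - κ) = κ by ring, Real.sqrt_mul (by linarith : (0:ℝ) ≤ 1 - κ)]
    rw [ha2, hb2]; ring_nf
    rfl
  rw [hs] at h2 h3
  rw [hF] at *
  set F := (a ^ 2 - b ^ 2) / (2 * (b * a)) with hF_def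
  set D := μ - σ * (b / a) with hD_def
  have hD : 0 < D := by
    by_contra hcon
    push_neg at hcon
    have : p / (2 * D) ≤ 0 := by
      rcases lt_or_eq_of_le hcon with h | h
      · exact le_of_lt (div_neg_of_pos_of_neg hp (by linarith))
      · rw [h]; norm_num
    linarith
  have hα₂ : 0 < α₂ := lt_of_lt_of_le (div_pos hp (by linarith)) h3
  have hCeq : μ ^ 2 - σ ^ 2 + 2 * μ * σ * F = D * (μ + σ * (a / b)) := by
    rw [hF_def, hD_def]
    field_simp
    ring
  have hC : 0 < μ ^ 2 - σ ^ 2 + 2 * μ * σ * F := by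
    rw [hCeq]; positivity
  have key1 : (μ ^ 2 - σ ^ 2 + 2 * μ * σ * F) * α₁ / p ≤ (μ + σ * (a / b)) / 2 := by
    have h2' : α₁ ≤ p / (2 * D) := h2.le
    have step : (μ ^ 2 - σ ^ 2 + 2 * μ * σ * F) * α₁ / p
        ≤ (μ ^ 2 - σ ^ 2 + 2 * μ * σ * F) * (p / (2 * D)) / p := by
      gcongr
    refine step.trans (le_of_eq ?_)
    rw [hCeq]
    field_simp
  have key2 : (μ + σ * (a / b)) / 2 ≤ μ + σ * F - p / (4 * α₂) := by
    have h3' : p ≤ α₂ * (2 * D) := by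
      rw [div_le_iff₀ (by linarith)] at h3; linarith
    have hpa : p / (4 * α₂) ≤ D / 2 := by
      rw [div_le_div_iff₀ (by linarith) (by norm_num)]
      linarith
    have heq : μ + σ * F - D / 2 = (μ + σ * (a / b)) / 2 := by
      rw [hF_def, hD_def]
      field_simp
      ring
    linarith
  constructor
  · linarith
  · have : 0 ≤ p / (4 * α₂) := by positivity
    linarith
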